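/- For any d ≥ 2 there is no sequence of measure-preserving bijections of Q_d with a geometric mixing rate: for every sequence {T_n}_{n≥1} of Lebesgue-measure-preserving bijections of Q_d, every κ ∈ (0,1), and every function λ : ℕ → (0,∞) with λ(n) → 0 as n → ∞, there exists f ∈ L^∞(Q_d) with ∫_{Q_d} f dx = 0 such that no τ ∈ ℕ has the property that for all n > τ with λ(n−τ) < 1 the function f ∘ T_n^{-1} is κ-mixed to scale λ(n−τ). -/

import Mathlib

open MeasureTheory Set Filter

noncomputable section

/-- The open unit cube `Q_d = (0,1)^d` in `ℝ^d` (with the Euclidean norm). -/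
def Qd (d : ℕ) : Set (EuclideanSpace ℝ (Fin d)) := {x | ∀ i, x i ∈ Ioo (0:ℝ) 1}

/-- `g`, a bounded mean-zero function on `Q_d` extended by zero to `ℝ^d`, is `κ`-mixed to
scale `ε`: the average of `g` over every Euclidean ball of radius `ε` centered in `Q_d` is
at most `κ ‖g‖_{L^∞(Q_d)}` in absolute value. -/
def KMixedToScale (d : ℕ) (g : EuclideanSpace ℝ (Fin d) → ℝ) (κ ε : ℝ) : Prop :=
  ∀ y ∈ Qd d, |⨍ x in Metric.ball y ε, (Qd d).indicator g x| ≤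
    κ * (eLpNorm g ⊤ (volume.restrict (Qd d))).toReal


/-! ### Auxiliary lemmas -/

lemma measurableSet_Qd (d : ℕ) : MeasurableSet (Qd d) := by
  have : Qd d = ⋂ i, (fun x : EuclideanSpace ℝ (Fin d) => x i) ⁻¹' (Ioo (0:ℝ) 1) := by
    ext x; simp [Qd]
  rw [this]
  exact MeasurableSet.iInter fun i =>
    ((measurable_pi_apply i).comp (MeasurableEquiv.toLp 2 (Fin d → ℝ)).symm.measurable)
      measurableSet_Ioo

lemma pi_preimage (d : ℕ) (s : Fin d → Set ℝ) :
    (⇑(MeasurableEquiv.toLp 2 (Fin d → ℝ)).symm) ⁻¹' (univ.pi s)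
      = {x : EuclideanSpace ℝ (Fin d) | ∀ i, x i ∈ s i} := by
  ext x
  simp [Set.mem_pi]

lemma volume_coord_set (d : ℕ) (s : Fin d → Set ℝ) (hs : ∀ i, MeasurableSet (s i)) :
    volume {x : EuclideanSpace ℝ (Fin d) | ∀ i, x i ∈ s i} = ∏ i, volume (s i) := by
  rw [← pi_preimage]
  rw [(EuclideanSpace.volume_preserving_symm_measurableEquiv_toLp (Fin d)).measure_preimage
    (MeasurableSet.univ_pi hs).nullMeasurableSet]
  exact volume_pi_pi s

lemma volume_Qd (d : ℕ) : volume (Qd d) = 1 := by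
  have : Qd d = {x : EuclideanSpace ℝ (Fin d) | ∀ i, x i ∈ Ioo (0:ℝ) 1} := rfl
  rw [this, volume_coord_set d _ (fun _ => measurableSet_Ioo)]
  simp [Real.volume_Ioo]

lemma coord_dist {d : ℕ} (x y : EuclideanSpace ℝ (Fin d)) (i : Fin d) :
    dist (x i) (y i) ≤ dist x y := by
  rw [EuclideanSpace.dist_eq]
  have h1 : dist (x i) (y i) = √(dist (x i) (y i) ^ 2) := by
    rw [Real.sqrt_sq dist_nonneg]
  rw [h1]
  apply Real.sqrt_le_sqrt
  exact Finset.single_le_sum (f := fun j => dist (x j) (y j) ^ 2)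
    (fun j _ => sq_nonneg _) (Finset.mem_univ i)

/-- The center of the cube. -/
def ctr (d : ℕ) : EuclideanSpace ℝ (Fin d) := WithLp.toLp 2 (fun _ => (1/2 : ℝ))

lemma ctr_mem_Qd (d : ℕ) : ctr d ∈ Qd d := fun i => by norm_num [ctr]

lemma ball_subset_Qd {d : ℕ} {ε : ℝ} (hε : ε ≤ 1/2) :
    Metric.ball (ctr d) ε ⊆ Qd d := by
  intro z hz
  intro i
  have h1 : dist (z i) (1/2 : ℝ) ≤ dist z (ctr d) := coord_dist z (ctr d) i
  have h2 : dist z (ctr d) < ε := Metric.mem_ball.1 hz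
  have : |z i - 1/2| < 1/2 := by
    rw [← Real.dist_eq]; linarith
  rw [abs_sub_lt_iff] at this
  constructor <;> linarith [this.1, this.2]

lemma ball_subset_box {d : ℕ} {y : EuclideanSpace ℝ (Fin d)} {ε : ℝ} :
    Metric.ball y ε ⊆ {x : EuclideanSpace ℝ (Fin d) | ∀ i, x i ∈ Ioo (y i - ε) (y i + ε)} := by
  intro z hz i
  have h1 : dist (z i) (y i) ≤ dist z y := coord_dist z y i
  have h2 : dist z y < ε := Metric.mem_ball.1 hz
  have : |z i - y i| < ε := by rw [← Real.dist_eq]; linarith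
  rw [abs_sub_lt_iff] at this
  constructor <;> [linarith [this.2]; linarith [this.1]]

lemma volume_ball_le {d : ℕ} (hd : 1 ≤ d) (y : EuclideanSpace ℝ (Fin d)) {ε : ℝ}
    (hε0 : 0 ≤ ε) (hε : 2 * ε ≤ 1) :
    volume (Metric.ball y ε) ≤ ENNReal.ofReal (2 * ε) := by
  have h1 : volume (Metric.ball y ε)
      ≤ volume {x : EuclideanSpace ℝ (Fin d) | ∀ i, x i ∈ Ioo (y i - ε) (y i + ε)} :=
    measure_mono ball_subset_box
  rw [volume_coord_set d _ (fun _ => measurableSet_Ioo)] at h1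
  have h2 : ∀ i : Fin d, volume (Ioo (y i - ε) (y i + ε)) = ENNReal.ofReal (2 * ε) := by
    intro i; rw [Real.volume_Ioo]; ring_nf
  simp only [h2, Finset.prod_const, Finset.card_univ, Fintype.card_fin] at h1
  calc volume (Metric.ball y ε) ≤ ENNReal.ofReal (2 * ε) ^ d := h1
    _ = ENNReal.ofReal ((2*ε) ^ d) := by rw [ENNReal.ofReal_pow (by linarith)]
    _ ≤ ENNReal.ofReal (2 * ε) := by
        apply ENNReal.ofReal_le_ofReal
        exact pow_le_of_le_one (by linarith) hε (by omega)

/-- The key measure-theoretic lemma: given a measure-preserving bijection `U` of the cube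
with inverse `Uinv`, and a measurable `B ⊆ Q_d`, there is a measurable set `S` of measure
at most that of `B` which contains the image under `Uinv` of all of `B` except a fixed
null set `N` (independent of `B`). -/
lemma key (d : ℕ) (U Uinv : EuclideanSpace ℝ (Fin d) → EuclideanSpace ℝ (Fin d))
    (hbij : Set.BijOn U (Qd d) (Qd d)) (hinv : Set.InvOn Uinv U (Qd d) (Qd d))
    (hmp : ∀ s ⊆ Qd d, MeasurableSet s → volume (U '' s) = volume s)
    (B : Set (EuclideanSpace ℝ (Fin d))) (hB : MeasurableSet B) (hBQ : B ⊆ Qd d) :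
    ∃ S N : Set (EuclideanSpace ℝ (Fin d)), MeasurableSet S ∧ S ⊆ Qd d ∧
      volume S ≤ volume B ∧ volume N = 0 ∧ ∀ z ∈ B, z ∉ N → Uinv z ∈ S := by
  classical
  let E := EuclideanSpace ℝ (Fin d)
  set Q := Qd d with hQdef
  have mQ : MeasurableSet Q := measurableSet_Qd d
  have hQfin : volume Q ≠ ⊤ := by rw [hQdef, volume_Qd]; exact ENNReal.one_ne_top
  -- basic inverse facts
  have hUUinv : ∀ z ∈ Q, U (Uinv z) = z := fun z hz => hinv.2 hz
  have hUinvU : ∀ x ∈ Q, Uinv (U x) = x := fun x hx => hinv.1 hx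
  have hUinvQ : ∀ z ∈ Q, Uinv z ∈ Q := by
    intro z hz
    obtain ⟨x, hx, rfl⟩ := hbij.surjOn hz
    rw [hUinvU x hx]; exact hx
  -- countable basis
  obtain ⟨b, hbc, -, hbasis⟩ := TopologicalSpace.exists_countable_basis E
  -- hull and kernel for each basis element
  set H : Set E → Set E := fun O => toMeasurable volume (U '' (Q ∩ O)) with hHdef
  set W : Set E → Set E := fun O => toMeasurable volume (U '' (Q \ O)) with hWdef
  set K : Set E → Set E := fun O => Q \ W O with hKdef
  have mH : ∀ O, MeasurableSet (H O) := fun O => measurableSet_toMeasurable _ _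
  have mK : ∀ O, MeasurableSet (K O) := fun O => mQ.diff (measurableSet_toMeasurable _ _)
  have hKE : ∀ O, K O ⊆ U '' (Q ∩ O) := by
    intro O z hz
    have hzQ : z ∈ Q := hz.1
    obtain ⟨x, hx, rfl⟩ := hbij.surjOn hzQ
    by_cases hxO : x ∈ O
    · exact ⟨x, ⟨hx, hxO⟩, rfl⟩
    · refine absurd (subset_toMeasurable volume (U '' (Q \ O)) ?_) hz.2
      exact ⟨x, ⟨hx, hxO⟩, rfl⟩
  have hEH : ∀ O, U '' (Q ∩ O) ⊆ H O := fun O => subset_toMeasurable _ _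
  have hKH : ∀ O, K O ⊆ H O := fun O => (hKE O).trans (hEH O)
  -- measures
  have hμH : ∀ O : Set E, O ∈ b → volume (H O) = volume (Q ∩ O) := by
    intro O hO
    rw [measure_toMeasurable]
    exact hmp _ inter_subset_left (mQ.inter (hbasis.isOpen hO).measurableSet)
  have hμW : ∀ O : Set E, O ∈ b → volume (W O) = volume (Q \ O) := by
    intro O hO
    rw [measure_toMeasurable]
    exact hmp _ diff_subset (mQ.diff (hbasis.isOpen hO).measurableSet)
  have hμK : ∀ O : Set E, O ∈ b → volume (Q ∩ O) ≤ volume (K O) := by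
    intro O hO
    have h1 : volume Q ≤ volume (K O) + volume (W O) := by
      refine le_trans (measure_mono ?_) (measure_union_le _ _)
      intro z hz
      by_cases h : z ∈ W O
      · exact Or.inr h
      · exact Or.inl ⟨hz, h⟩
    rw [hμW O hO] at h1
    have h2 : volume (Q ∩ O) + volume (Q \ O) = volume Q :=
      measure_inter_add_diff Q (hbasis.isOpen hO).measurableSet
    have hfin : volume (Q \ O) ≠ ⊤ :=
      fun h => hQfin (top_le_iff.1 (h ▸ measure_mono (diff_subset : Q \ O ⊆ Q)))
    rw [← h2] at h1
    exact (ENNReal.add_le_add_iff_right hfin).1 h1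
  have hμD : ∀ O : Set E, O ∈ b → volume (H O \ K O) = 0 := by
    intro O hO
    have hKfin : volume (K O) ≠ ⊤ :=
      fun h => hQfin (top_le_iff.1 (h ▸ measure_mono (diff_subset : Q \ W O ⊆ Q)))
    have h1 : volume (H O \ K O) + volume (K O) = volume (H O) := by
      rw [← measure_union disjoint_sdiff_left (mK O), diff_union_of_subset (hKH O)]
    have h2 : volume (H O) ≤ volume (K O) := by
      rw [hμH O hO]; exact hμK O hO
    have h3 : volume (H O \ K O) + volume (K O) ≤ 0 + volume (K O) := by
      rw [zero_add]; exact h1.le.trans h2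
    exact le_antisymm ((ENNReal.add_le_add_iff_right hKfin).1 h3) zero_le
  -- the null dust set
  set N : Set E := ⋃ O ∈ b, (H O \ K O) with hNdef
  have hN0 : volume N = 0 := (measure_biUnion_null_iff hbc).2 (fun O hO => hμD O hO)
  -- the dictionary
  have hdict : ∀ z ∈ Q, z ∉ N → ∀ O ∈ b, (Uinv z ∈ O ↔ z ∈ K O) := by
    intro z hzQ hzN O hO
    constructor
    · intro hO'
      have h1 : z ∈ U '' (Q ∩ O) := by
        refine ⟨Uinv z, ⟨hUinvQ z hzQ, hO'⟩, hUUinv z hzQ⟩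
      have h2 : z ∈ H O := hEH O h1
      by_contra hzK
      exact hzN (mem_biUnion hO ⟨h2, hzK⟩)
    · intro hzK
      obtain ⟨x, hx, rfl⟩ := hKE O hzK
      rw [hUinvU x hx.1]
      exact hx.2
  -- the subtype map
  set G : Set E := Q \ N with hGdef
  have mN : MeasurableSet N :=
    MeasurableSet.biUnion hbc (fun O hO => (mH O).diff (mK O))
  have mG : MeasurableSet G := mQ.diff mN
  haveI : StandardBorelSpace G := mG.standardBorel
  set V : G → E := fun x => Uinv ↑x with hVdef
  have hVmeas : Measurable V := by
    have hgen : (borel E : MeasurableSpace E) = MeasurableSpace.generateFrom b :=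
      hbasis.borel_eq_generateFrom
    have : @Measurable G E _ (MeasurableSpace.generateFrom b) V := by
      apply measurable_generateFrom
      intro O hO
      have : V ⁻¹' O = Subtype.val ⁻¹' (K O) := by
        ext x
        exact hdict x.1 x.2.1 x.2.2 O hO
      rw [this]
      exact measurable_subtype_coe (mK O)
    have hB : (inferInstance : MeasurableSpace E) = MeasurableSpace.generateFrom b := by
      rw [← hgen]; exact BorelSpace.measurable_eq
    exact fun t ht => this (hB ▸ ht)
  have hVinj : Function.Injective V := by
    intro x y hxy
    have hx : U (Uinv ↑x) = ↑x := hUUinv _ x.2.1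
    have hy : U (Uinv ↑y) = ↑y := hUUinv _ y.2.1
    have h2 := congrArg U hxy
    have : (x : EuclideanSpace ℝ (Fin d)) = (y : EuclideanSpace ℝ (Fin d)) := by
      rw [hx, hy] at h2; exact h2
    exact Subtype.ext this
  have hVemb : MeasurableEmbedding V := hVmeas.measurableEmbedding hVinj
  -- the set S
  refine ⟨V '' (Subtype.val ⁻¹' B), N, hVemb.measurableSet_image' (measurable_subtype_coe hB),
    ?_, ?_, hN0, ?_⟩
  · rintro s ⟨x, -, rfl⟩
    exact hUinvQ _ x.2.1
  · have himg : U '' (V '' (Subtype.val ⁻¹' B)) = B ∩ G := by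
      rw [← image_comp]
      ext z
      constructor
      · rintro ⟨x, hx, rfl⟩
        have : U (V x) = ↑x := hUUinv _ x.2.1
        rw [Function.comp_apply, this]
        exact ⟨hx, x.2⟩
      · rintro ⟨hzB, hzG⟩
        refine ⟨⟨z, hzG⟩, hzB, ?_⟩
        exact hUUinv _ hzG.1
    have hSQ : V '' (Subtype.val ⁻¹' B) ⊆ Q := by
      rintro s ⟨x, -, rfl⟩; exact hUinvQ _ x.2.1
    have := hmp _ hSQ (hVemb.measurableSet_image' (measurable_subtype_coe hB))
    rw [himg] at this
    rw [← this]
    exact measure_mono inter_subset_left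
  · intro z hzB hzN
    exact ⟨⟨z, ⟨hBQ hzB, hzN⟩⟩, hzB, rfl⟩


theorem no_universal_geometric_mixing_rate (d : ℕ) (hd : 2 ≤ d)
    (T Tinv : ℕ → EuclideanSpace ℝ (Fin d) → EuclideanSpace ℝ (Fin d))
    (hbij : ∀ n, Set.BijOn (T n) (Qd d) (Qd d))
    (hinv : ∀ n, Set.InvOn (Tinv n) (T n) (Qd d) (Qd d))
    (hmp : ∀ n, ∀ s ⊆ Qd d, MeasurableSet s → volume (T n '' s) = volume s)
    (κ : ℝ) (hκ : κ ∈ Ioo (0:ℝ) 1)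
    (lam : ℕ → ℝ) (hlam : ∀ n, 0 < lam n) (hlim : Tendsto lam atTop (nhds 0)) :
    ∃ f : EuclideanSpace ℝ (Fin d) → ℝ,
      MemLp f ⊤ (volume.restrict (Qd d)) ∧ (∫ x in Qd d, f x) = 0 ∧
        ¬ ∃ τ : ℕ, ∀ n : ℕ, τ < n → lam (n - τ) < 1 →
            KMixedToScale d (f ∘ Tinv n) κ (lam (n - τ)) := by
  classical
  obtain ⟨hκ0, hκ1⟩ := hκ
  haveI : IsFiniteMeasure (volume.restrict (Qd d)) := by
    constructor
    rw [Measure.restrict_apply_univ, volume_Qd]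
    exact ENNReal.one_lt_top
  -- choose scales
  have hchoice : ∀ τ : ℕ, ∃ mm : ℕ, 1 ≤ mm ∧ lam mm < (2⁻¹ : ℝ)^(τ+5) := by
    intro τ
    have h1 : (0:ℝ) < 2⁻¹^(τ+5) := by positivity
    obtain ⟨mm, hmm⟩ := ((hlim.eventually (gt_mem_nhds h1)).and (eventually_ge_atTop 1)).exists
    exact ⟨mm, hmm.2, hmm.1⟩
  choose m hm1 hm2 using hchoice
  have hεpos : ∀ τ, 0 < lam (m τ) := fun τ => hlam _
  have hpow1 : ∀ τ : ℕ, (2⁻¹:ℝ)^(τ+5) ≤ 2⁻¹ := by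
    intro τ
    calc (2⁻¹:ℝ)^(τ+5) ≤ 2⁻¹^1 := by
          apply pow_le_pow_of_le_one (by norm_num) (by norm_num) (by omega)
      _ = 2⁻¹ := pow_one _
  have hεhalf : ∀ τ, lam (m τ) ≤ 1/2 := by
    intro τ
    have := hm2 τ; have := hpow1 τ; linarith
  set B : ℕ → Set (EuclideanSpace ℝ (Fin d)) := fun τ => Metric.ball (ctr d) (lam (m τ))
    with hBdef
  have hBQ : ∀ τ, B τ ⊆ Qd d := fun τ => ball_subset_Qd (hεhalf τ)
  -- apply key
  have hk := fun τ : ℕ => key d (T (τ + m τ)) (Tinv (τ + m τ)) (hbij _) (hinv _) (hmp _)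
    (B τ) measurableSet_ball (hBQ τ)
  choose S N mS hSQ hμS hN0 hmem using hk
  -- the positive set P
  set P : Set (EuclideanSpace ℝ (Fin d)) := ⋃ τ, S τ with hPdef
  have mP : MeasurableSet P := MeasurableSet.iUnion mS
  have hPQ : P ⊆ Qd d := iUnion_subset hSQ
  have hμP : volume P ≤ ENNReal.ofReal (1/8) := by
    have hball : ∀ τ : ℕ, volume (S τ) ≤ ENNReal.ofReal ((2⁻¹:ℝ)^(τ+4)) := by
      intro τ
      refine (hμS τ).trans ?_
      refine le_trans (volume_ball_le (by omega) _ (hεpos τ).le ?_) ?_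
      · have := hεhalf τ; linarith
      · apply ENNReal.ofReal_le_ofReal
        have h2 := hm2 τ
        have h3 : (2⁻¹:ℝ)^(τ+5) = 2⁻¹^(τ+4) * 2⁻¹ := pow_succ _ _
        nlinarith [hεpos τ]
    calc volume P ≤ ∑' τ, volume (S τ) := measure_iUnion_le _
      _ ≤ ∑' τ : ℕ, ENNReal.ofReal ((2⁻¹:ℝ)^(τ+4)) := ENNReal.tsum_le_tsum hball
      _ = ENNReal.ofReal (∑' τ : ℕ, (2⁻¹:ℝ)^(τ+4)) := by
          rw [ENNReal.ofReal_tsum_of_nonneg (fun τ => by positivity)]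
          · exact (summable_geometric_of_lt_one (by norm_num) (by norm_num)).comp_injective
              (add_left_injective 4) |>.congr (fun τ => rfl)
      _ ≤ ENNReal.ofReal (1/8) := by
          apply ENNReal.ofReal_le_ofReal
          have : ∑' τ : ℕ, (2⁻¹:ℝ)^(τ+4) = (∑' τ : ℕ, (2⁻¹:ℝ)^τ) * 2⁻¹^4 := by
            rw [← tsum_mul_right]
            congr 1; funext τ; rw [pow_add]
          rw [this, tsum_geometric_of_lt_one (by norm_num) (by norm_num)]
          norm_num
  set p : ℝ := (volume P).toReal with hpdef
  have hp8 : p ≤ 1/8 := ENNReal.toReal_le_of_le_ofReal (by norm_num) hμP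
  have hp0 : 0 ≤ p := ENNReal.toReal_nonneg
  have h1p : (0:ℝ) < 1 - p := by linarith
  set c : ℝ := p / (1 - p) with hcdef
  have hc0 : 0 ≤ c := div_nonneg hp0 h1p.le
  have hc1 : c ≤ 1 := by rw [div_le_one h1p]; linarith
  set f : EuclideanSpace ℝ (Fin d) → ℝ :=
    (Qd d).indicator (fun x => P.indicator (fun _ => 1 + c) x - c) with hfdef
  have hfb : ∀ x, |f x| ≤ 1 := by
    intro x
    rw [hfdef]
    by_cases hx : x ∈ Qd d
    · rw [Set.indicator_of_mem hx]
      by_cases hxP : x ∈ P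
      · rw [Set.indicator_of_mem hxP]
        simp
      · rw [Set.indicator_of_notMem hxP]
        rw [abs_le]; constructor <;> simp <;> linarith
    · rw [Set.indicator_of_notMem hx]; norm_num
  have hfmeas : Measurable f := by
    apply Measurable.indicator _ (measurableSet_Qd d)
    exact (measurable_const.indicator mP).sub measurable_const
  refine ⟨f, ?_, ?_, ?_⟩
  · exact memLp_top_of_bound hfmeas.aestronglyMeasurable 1
      (ae_of_all _ (fun x => by rw [Real.norm_eq_abs]; exact hfb x))
  · have h1 : ∫ x in Qd d, f x = ∫ x in Qd d, (P.indicator (fun _ => 1 + c) x - c) := by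
      apply setIntegral_congr_fun (measurableSet_Qd d)
      intro x hx
      rw [hfdef]; exact Set.indicator_of_mem hx _
    rw [h1]
    have hint1 : Integrable (P.indicator (fun _ => (1+c:ℝ))) (volume.restrict (Qd d)) :=
      (integrable_const (1+c)).indicator mP
    rw [integral_sub hint1 (integrable_const c)]
    rw [setIntegral_indicator mP, inter_eq_self_of_subset_right hPQ]
    rw [setIntegral_const, setIntegral_const]
    rw [measureReal_def, measureReal_def, volume_Qd]
    simp only [smul_eq_mul, ENNReal.toReal_one, one_mul, ← hpdef]
    rw [hcdef]
    field_simp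
    ring
  · rintro ⟨τ, hτ⟩
    have hlt : τ < τ + m τ := by have := hm1 τ; omega
    have hsub : τ + m τ - τ = m τ := by omega
    have hlam1 : lam (τ + m τ - τ) < 1 := by
      rw [hsub]
      have := hm2 τ; have := hpow1 τ; linarith
    have hKM := hτ (τ + m τ) hlt hlam1
    rw [KMixedToScale, hsub] at hKM
    have h := hKM (ctr d) (ctr_mem_Qd d)
    set n := τ + m τ with hndef
    -- average is 1
    have hint : ∀ᵐ z ∂(volume.restrict (B τ)), (Qd d).indicator (f ∘ Tinv n) z = 1 := by
      have h1 : ∀ᵐ z ∂(volume.restrict (B τ)), z ∉ N τ :=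
        ae_restrict_of_ae ((measure_eq_zero_iff_ae_notMem (μ := volume)).1 (hN0 τ))
      have h2 : ∀ᵐ z ∂(volume.restrict (B τ)), z ∈ B τ :=
        ae_restrict_mem measurableSet_ball
      filter_upwards [h1, h2] with z hzN hzB
      have hzQ : z ∈ Qd d := hBQ τ hzB
      rw [Set.indicator_of_mem hzQ]
      have hTz : Tinv n z ∈ S τ := hmem τ z hzB hzN
      have hTzP : Tinv n z ∈ P := mem_iUnion.2 ⟨τ, hTz⟩
      show f (Tinv n z) = 1
      rw [hfdef, Set.indicator_of_mem (hPQ hTzP), Set.indicator_of_mem hTzP]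
      ring
    have hμBpos : volume (B τ) ≠ 0 := (Metric.measure_ball_pos volume _ (hεpos τ)).ne'
    have hμBtop : volume (B τ) ≠ ⊤ := measure_ball_lt_top.ne
    have havg : ⨍ x in B τ, (Qd d).indicator (f ∘ Tinv n) x = 1 := by
      rw [setAverage_eq]
      have heq : ∫ x in B τ, (Qd d).indicator (f ∘ Tinv n) x = ∫ _x in B τ, (1:ℝ) :=
        integral_congr_ae hint
      rw [heq, setIntegral_const, smul_eq_mul, smul_eq_mul, mul_one]
      rw [measureReal_def, inv_mul_cancel₀ (ENNReal.toReal_ne_zero.2 ⟨hμBpos, hμBtop⟩)]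
    have hnorm : (eLpNorm (f ∘ Tinv n) ⊤ (volume.restrict (Qd d))).toReal ≤ 1 := by
      have h1 : eLpNorm (f ∘ Tinv n) ⊤ (volume.restrict (Qd d)) ≤ ENNReal.ofReal 1 := by
        rw [eLpNorm_exponent_top]
        exact eLpNormEssSup_le_of_ae_bound (ae_of_all _ fun z => by
          rw [Function.comp_apply, Real.norm_eq_abs]; exact hfb _)
      calc (eLpNorm (f ∘ Tinv n) ⊤ (volume.restrict (Qd d))).toReal
          ≤ (ENNReal.ofReal 1).toReal := ENNReal.toReal_mono ENNReal.ofReal_ne_top h1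
        _ = 1 := by simp
    rw [havg] at h
    rw [abs_one] at h
    have : κ * (eLpNorm (f ∘ Tinv n) ⊤ (volume.restrict (Qd d))).toReal ≤ κ * 1 :=
      mul_le_mul_of_nonneg_left hnorm hκ0.le
    linarith


end
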